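/- Let z₁, z₂, z₃, z₄ be complex numbers with |z₁| = |z₂| = |z₃| = |z₄| = 1 and z₁ + z₂ + z₃ + z₄ = 0. Then the four numbers split into two antipodal pairs: (z₂ = −z₁ and z₄ = −z₃), or (z₃ = −z₁ and z₄ = −z₂), or (z₄ = −z₁ and z₃ = −z₂). -/

import Mathlib

open Complex

/-- Four unit complex numbers summing to zero split into two antipodal
pairs. -/
theorem stmt_17 (z₁ z₂ z₃ z₄ : ℂ)
    (h1 : ‖z₁‖ = 1) (h2 : ‖z₂‖ = 1)
    (h3 : ‖z₃‖ = 1) (h4 : ‖z₄‖ = 1)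
    (hsum : z₁ + z₂ + z₃ + z₄ = 0) :
    (z₂ = -z₁ ∧ z₄ = -z₃) ∨ (z₃ = -z₁ ∧ z₄ = -z₂) ∨ (z₄ = -z₁ ∧ z₃ = -z₂) := by
  have n1 : z₁ ≠ 0 := by intro h; simp [h] at h1
  have n2 : z₂ ≠ 0 := by intro h; simp [h] at h2
  have n3 : z₃ ≠ 0 := by intro h; simp [h] at h3
  have n4 : z₄ ≠ 0 := by intro h; simp [h] at h4
  have i1 : z₁⁻¹ = starRingEnd ℂ z₁ := Complex.inv_eq_conj h1
  have i2 : z₂⁻¹ = starRingEnd ℂ z₂ := Complex.inv_eq_conj h2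
  have i3 : z₃⁻¹ = starRingEnd ℂ z₃ := Complex.inv_eq_conj h3
  have i4 : z₄⁻¹ = starRingEnd ℂ z₄ := Complex.inv_eq_conj h4
  have hconj : z₁⁻¹ + z₂⁻¹ + z₃⁻¹ + z₄⁻¹ = 0 := by
    rw [i1, i2, i3, i4, ← map_add, ← map_add, ← map_add, hsum, map_zero]
  have he3 : z₂*z₃*z₄ + z₁*z₃*z₄ + z₁*z₂*z₄ + z₁*z₂*z₃ = 0 := by
    field_simp at hconj
    linear_combination hconj
  have hkey : (z₁ + z₂) * ((z₁ + z₃) * (z₁ + z₄)) = 0 := by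
    linear_combination z₁^2 * hsum + he3
  rcases mul_eq_zero.1 hkey with h | h
  · left
    constructor
    · linear_combination h
    · linear_combination hsum - h
  · rcases mul_eq_zero.1 h with h | h
    · right; left
      constructor
      · linear_combination h
      · linear_combination hsum - h
    · right; right
      constructor
      · linear_combination h
      · linear_combination hsum - h
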